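/- Assume d(n) → ∞ and (n − d)/d → 0. Then for every fixed r > 0, F(n,d,−1,−r/√d) → 0 and F(n,d, r/√d, 1) → 0 as n → ∞; that is, the expected number of facets whose height lies outside the interval (−r/√d, r/√d) tends to zero. -/

import Mathlib

open Filter

noncomputable def c1 (d : ℕ) : ℝ :=
  Real.Gamma ((d : ℝ) / 2) / (Real.sqrt Real.pi * Real.Gamma (((d : ℝ) - 1) / 2))

noncomputable def c2 (d : ℕ) : ℝ :=
  Real.Gamma (((d : ℝ) ^ 2 - 2 * (d : ℝ) + 2) / 2) /
    (Real.sqrt Real.pi * Real.Gamma (((d : ℝ) ^ 2 - 2 * (d : ℝ) + 1) / 2))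

/-- `II n d a b` is the integral `I(n,d,a,b)` from the paper. -/
noncomputable def II (n d : ℕ) (a b : ℝ) : ℝ :=
  ∫ h in a..b, (1 - h ^ 2) ^ (((d : ℝ) ^ 2 - 2 * (d : ℝ) - 1) / 2) *
    (c1 d * ∫ s in (-1 : ℝ)..h, (1 - s ^ 2) ^ (((d : ℝ) - 3) / 2)) ^ (n - d)

/-- `FF n d a b` is the expected number of facets with height in `[a,b]`. -/
noncomputable def FF (n d : ℕ) (a b : ℝ) : ℝ :=
  (n.choose d : ℝ) * 2 * c2 d * II n d a b

/-- The standard normal CDF. -/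
noncomputable def stdPhi (r : ℝ) : ℝ :=
  (Real.sqrt (2 * Real.pi))⁻¹ * ∫ s in Set.Iic r, Real.exp (-s ^ 2 / 2)

lemma gamma_add_half_le {x : ℝ} (hx : 0 < x) :
    Real.Gamma (x + 1/2) ≤ Real.Gamma x * Real.sqrt x := by
  have hx1 : (0:ℝ) < x + 1 := by linarith
  have hxh : (0:ℝ) < x + 1/2 := by linarith
  have hG : 0 < Real.Gamma x := Real.Gamma_pos_of_pos hx
  have hG1 : 0 < Real.Gamma (x+1) := Real.Gamma_pos_of_pos hx1
  have hGh : 0 < Real.Gamma (x+1/2) := Real.Gamma_pos_of_pos hxh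
  have hcv := Real.convexOn_log_Gamma.2 (Set.mem_Ioi.2 hx) (Set.mem_Ioi.2 hx1)
    (by norm_num : (0:ℝ) ≤ 1/2) (by norm_num : (0:ℝ) ≤ 1/2) (by norm_num)
  have hmid : (1/2 : ℝ) • x + (1/2 : ℝ) • (x+1) = x + 1/2 := by
    simp [smul_eq_mul]; ring
  rw [hmid] at hcv
  simp only [Function.comp_apply, smul_eq_mul] at hcv
  have hsq : Real.Gamma (x+1/2)^2 ≤ Real.Gamma x * Real.Gamma (x+1) := by
    have h2 : Real.log (Real.Gamma (x+1/2)^2) ≤ Real.log (Real.Gamma x * Real.Gamma (x+1)) := by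
      rw [Real.log_pow, Real.log_mul hG.ne' hG1.ne']
      push_cast
      linarith
    exact (Real.log_le_log_iff (by positivity) (by positivity)).1 h2
  have : Real.Gamma x * Real.Gamma (x+1) = (Real.Gamma x * Real.sqrt x)^2 := by
    rw [Real.Gamma_add_one hx.ne']
    rw [mul_pow, Real.sq_sqrt hx.le]
    ring
  rw [this] at hsq
  nlinarith [hGh, Real.sqrt_nonneg x, mul_nonneg hG.le (Real.sqrt_nonneg x)]

lemma sqrt_pi_ge_one : (1:ℝ) ≤ Real.sqrt Real.pi := by
  rw [show (1:ℝ) = Real.sqrt 1 by simp]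
  exact Real.sqrt_le_sqrt (by linarith [Real.pi_gt_three])

lemma ratio_le_sqrt {x : ℝ} (hx : 0 < x) :
    Real.Gamma (x + 1/2) / (Real.sqrt Real.pi * Real.Gamma x) ≤ Real.sqrt x := by
  have hG : 0 < Real.Gamma x := Real.Gamma_pos_of_pos hx
  have hden : 0 < Real.sqrt Real.pi * Real.Gamma x := by
    have := sqrt_pi_ge_one; nlinarith
  rw [div_le_iff₀ hden]
  calc Real.Gamma (x + 1/2) ≤ Real.Gamma x * Real.sqrt x := gamma_add_half_le hx
    _ ≤ Real.sqrt x * (Real.sqrt Real.pi * Real.Gamma x) := by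
        have := sqrt_pi_ge_one
        nlinarith [Real.sqrt_nonneg x, mul_nonneg hG.le (Real.sqrt_nonneg x)]

lemma c1_nonneg {d : ℕ} (hd : 2 ≤ d) : 0 ≤ c1 d := by
  have h1 : (0:ℝ) < (d:ℝ)/2 := by
    have : (2:ℝ) ≤ d := by exact_mod_cast hd
    linarith
  have h2 : (0:ℝ) < ((d:ℝ)-1)/2 := by
    have : (2:ℝ) ≤ d := by exact_mod_cast hd
    linarith
  have := sqrt_pi_ge_one
  exact div_nonneg (Real.Gamma_pos_of_pos h1).le
    (by nlinarith [(Real.Gamma_pos_of_pos h2)])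

lemma c1_le_sqrt {d : ℕ} (hd : 2 ≤ d) : c1 d ≤ Real.sqrt d := by
  have hdr : (2:ℝ) ≤ d := by exact_mod_cast hd
  have hx : (0:ℝ) < ((d:ℝ)-1)/2 := by linarith
  have key := ratio_le_sqrt hx
  have h1 : ((d:ℝ)-1)/2 + 1/2 = (d:ℝ)/2 := by ring
  rw [h1] at key
  refine le_trans key (Real.sqrt_le_sqrt (by linarith))

lemma c2_nonneg {d : ℕ} (hd : 2 ≤ d) : 0 ≤ c2 d := by
  have hdr : (2:ℝ) ≤ d := by exact_mod_cast hd
  have h1 : (0:ℝ) < ((d:ℝ)^2 - 2*d + 2)/2 := by nlinarith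
  have h2 : (0:ℝ) < ((d:ℝ)^2 - 2*d + 1)/2 := by nlinarith
  have := sqrt_pi_ge_one
  exact div_nonneg (Real.Gamma_pos_of_pos h1).le
    (by nlinarith [(Real.Gamma_pos_of_pos h2)])

lemma c2_le {d : ℕ} (hd : 2 ≤ d) : c2 d ≤ (d:ℝ) := by
  have hdr : (2:ℝ) ≤ d := by exact_mod_cast hd
  have hx : (0:ℝ) < ((d:ℝ)^2 - 2*d + 1)/2 := by nlinarith
  have key := ratio_le_sqrt hx
  have h1 : ((d:ℝ)^2 - 2*d + 1)/2 + 1/2 = ((d:ℝ)^2 - 2*d + 2)/2 := by ring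
  rw [h1] at key
  refine le_trans key ?_
  calc Real.sqrt (((d:ℝ)^2 - 2*d + 1)/2) ≤ Real.sqrt ((d:ℝ)^2) :=
        Real.sqrt_le_sqrt (by nlinarith)
    _ = (d:ℝ) := Real.sqrt_sq (by linarith)

lemma inner_bound {d : ℕ} (hd : 27 ≤ d) {h : ℝ} (hm : -1 ≤ h) (hM : h ≤ 1) :
    0 ≤ c1 d * ∫ s in (-1:ℝ)..h, (1 - s ^ 2) ^ (((d : ℝ) - 3) / 2) ∧
    c1 d * (∫ s in (-1:ℝ)..h, (1 - s ^ 2) ^ (((d : ℝ) - 3) / 2)) ≤ 3 := by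
  have hdr : (27:ℝ) ≤ d := by exact_mod_cast hd
  set p : ℝ := ((d : ℝ) - 3) / 2 with hp_def
  have hp : (0:ℝ) < p := by simp only [hp_def]; linarith
  have hcont : Continuous (fun s : ℝ => (1 - s ^ 2) ^ p) :=
    (Real.continuous_rpow_const hp.le).comp (by continuity)
  have hnonneg : ∀ s : ℝ, s ∈ Set.Icc (-1:ℝ) 1 → 0 ≤ (1 - s ^ 2) ^ p := by
    intro s hs
    exact Real.rpow_nonneg (by nlinarith [hs.1, hs.2]) p
  have hInonneg : 0 ≤ ∫ s in (-1:ℝ)..h, (1 - s ^ 2) ^ p :=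
    intervalIntegral.integral_nonneg hm
      (fun u hu => hnonneg u ⟨hu.1, le_trans hu.2 hM⟩)
  have hc1n := c1_nonneg (le_trans (by norm_num) hd)
  constructor
  · exact mul_nonneg hc1n hInonneg
  -- step 1 : ∫_{-1}^h ≤ ∫_{-1}^1
  have hii : ∀ x y : ℝ, IntervalIntegrable (fun s : ℝ => (1 - s ^ 2) ^ p) MeasureTheory.volume x y :=
    fun x y => hcont.intervalIntegrable x y
  have step1 : (∫ s in (-1:ℝ)..h, (1 - s ^ 2) ^ p) ≤ ∫ s in (-1:ℝ)..1, (1 - s ^ 2) ^ p := by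
    have hadd := intervalIntegral.integral_add_adjacent_intervals (hii (-1) h) (hii h 1)
    have h2 : 0 ≤ ∫ s in h..(1:ℝ), (1 - s ^ 2) ^ p :=
      intervalIntegral.integral_nonneg hM (fun u hu => hnonneg u ⟨le_trans hm hu.1, hu.2⟩)
    linarith [hadd]
  -- step 2 : compare with gaussian
  have step2 : (∫ s in (-1:ℝ)..1, (1 - s ^ 2) ^ p) ≤ ∫ s in (-1:ℝ)..1, Real.exp (-p * s ^ 2) := by
    refine intervalIntegral.integral_mono_on (by norm_num) (hii (-1) 1)
      ((Real.continuous_exp.comp (by continuity)).intervalIntegrable _ _) ?_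
    intro s hs
    have h1 : (1 - s ^ 2 : ℝ) ≤ Real.exp (-s^2) := by
      have := Real.add_one_le_exp (-s^2)
      linarith
    calc (1 - s ^ 2) ^ p ≤ (Real.exp (-s^2)) ^ p :=
          Real.rpow_le_rpow (by nlinarith [hs.1, hs.2]) h1 hp.le
      _ = Real.exp (-p * s ^ 2) := by rw [← Real.exp_mul]; ring_nf
  -- step 3 : gaussian integral bound
  have step3 : (∫ s in (-1:ℝ)..1, Real.exp (-p * s ^ 2)) ≤ Real.sqrt (Real.pi / p) := by
    rw [intervalIntegral.integral_of_le (by norm_num : (-1:ℝ) ≤ 1)]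
    rw [← integral_gaussian p]
    exact MeasureTheory.setIntegral_le_integral (integrable_exp_neg_mul_sq hp)
      (Filter.Eventually.of_forall (fun s => (Real.exp_pos _).le))
  -- combine
  have hc1 : c1 d ≤ Real.sqrt d := c1_le_sqrt (le_trans (by norm_num) hd)
  calc c1 d * (∫ s in (-1:ℝ)..h, (1 - s ^ 2) ^ p)
      ≤ Real.sqrt d * Real.sqrt (Real.pi / p) := by
        apply mul_le_mul hc1 (le_trans step1 (le_trans step2 step3)) hInonneg
          (Real.sqrt_nonneg _)
    _ = Real.sqrt ((d:ℝ) * (Real.pi / p)) := (Real.sqrt_mul (by positivity) _).symm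
    _ ≤ Real.sqrt 9 := by
        apply Real.sqrt_le_sqrt
        rw [show (d:ℝ) * (Real.pi / p) = (d:ℝ) * Real.pi / p by ring, div_le_iff₀ hp]
        simp only [hp_def]
        nlinarith [Real.pi_le_four, Real.pi_pos]
    _ ≤ 3 := by
        rw [show (9:ℝ) = 3^2 by norm_num, Real.sqrt_sq (by norm_num)]

lemma FF_bound (n d : ℕ) (a b r : ℝ) (hd27 : 27 ≤ d)
    (hr : 0 < r) (ha : -1 ≤ a) (hab : a ≤ b) (hb : b ≤ 1)
    (hh : ∀ h ∈ Set.uIoc a b, r ^ 2 / (d:ℝ) ≤ h ^ 2) :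
    ‖FF n d a b‖ ≤ (n.choose d : ℝ) * (4 * d) *
      (3 ^ (n - d) * Real.exp (-((d:ℝ) * r ^ 2) / 4)) := by
  have hdr : (27:ℝ) ≤ d := by exact_mod_cast hd27
  have hd2 : 2 ≤ d := le_trans (by norm_num) hd27
  set K : ℝ := ((d : ℝ) ^ 2 - 2 * (d : ℝ) - 1) / 2 with hK_def
  have hK : 0 ≤ K := by simp only [hK_def]; nlinarith
  set M : ℝ := Real.exp (-(r ^ 2 / (d:ℝ)) * K) * 3 ^ (n - d) with hM_def
  have hM0 : 0 ≤ M := by positivity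
  -- pointwise bound on the integrand
  have hpt : ∀ h ∈ Set.uIoc a b,
      ‖(1 - h ^ 2) ^ K *
        (c1 d * ∫ s in (-1 : ℝ)..h, (1 - s ^ 2) ^ (((d : ℝ) - 3) / 2)) ^ (n - d)‖ ≤ M := by
    intro h hmem
    rw [Set.uIoc_of_le hab] at hmem
    have hm1 : -1 ≤ h := le_trans ha hmem.1.le
    have hM1 : h ≤ 1 := le_trans hmem.2 hb
    have hsq : 0 ≤ 1 - h ^ 2 := by nlinarith
    obtain ⟨hin0, hin3⟩ := inner_bound hd27 hm1 hM1
    have h1 : (1 - h ^ 2) ^ K ≤ Real.exp (-(r ^ 2 / (d:ℝ)) * K) := by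
      have hhh : r ^ 2 / (d:ℝ) ≤ h ^ 2 := hh h (by rw [Set.uIoc_of_le hab]; exact hmem)
      calc (1 - h ^ 2) ^ K ≤ (Real.exp (-(r ^ 2 / (d:ℝ)))) ^ K := by
            apply Real.rpow_le_rpow hsq _ hK
            have := Real.add_one_le_exp (-(r ^ 2 / (d:ℝ)))
            linarith
        _ = Real.exp (-(r ^ 2 / (d:ℝ)) * K) := (Real.exp_mul _ _).symm
    have h2 : (c1 d * ∫ s in (-1 : ℝ)..h, (1 - s ^ 2) ^ (((d : ℝ) - 3) / 2)) ^ (n - d)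
        ≤ 3 ^ (n - d) := pow_le_pow_left₀ hin0 hin3 _
    rw [norm_mul, Real.norm_eq_abs, Real.norm_eq_abs,
      abs_of_nonneg (Real.rpow_nonneg hsq K), abs_of_nonneg (pow_nonneg hin0 _)]
    exact mul_le_mul h1 h2 (pow_nonneg hin0 _) (Real.exp_pos _).le
  have hII : ‖II n d a b‖ ≤ M * 2 := by
    have := intervalIntegral.norm_integral_le_of_norm_le_const hpt
    refine le_trans this ?_
    have : |b - a| ≤ 2 := by rw [abs_of_nonneg (by linarith)]; linarith
    nlinarith
  -- combine
  have hc2 := c2_le hd2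
  have hc2n := c2_nonneg hd2
  have hch : (0:ℝ) ≤ (n.choose d : ℝ) := by positivity
  have hexp : Real.exp (-(r ^ 2 / (d:ℝ)) * K) ≤ Real.exp (-((d:ℝ) * r ^ 2) / 4) := by
    apply Real.exp_le_exp.2
    have hd0 : (0:ℝ) < d := by linarith
    rw [hK_def, neg_mul, neg_div, neg_le_neg_iff,
      div_mul_eq_mul_div, div_le_div_iff₀ (by norm_num) hd0]
    nlinarith [sq_nonneg r, mul_nonneg (sq_nonneg r) (by nlinarith : (0:ℝ) ≤ (d:ℝ)^2 - 4*d - 2)]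
  calc ‖FF n d a b‖ = (n.choose d : ℝ) * 2 * c2 d * ‖II n d a b‖ := by
        rw [FF, norm_mul, Real.norm_eq_abs (((n.choose d : ℝ)) * 2 * c2 d),
          abs_of_nonneg (by positivity)]
    _ ≤ (n.choose d : ℝ) * 2 * c2 d * (M * 2) := by
        apply mul_le_mul_of_nonneg_left hII (by positivity)
    _ ≤ (n.choose d : ℝ) * 2 * (d:ℝ) * (M * 2) := by
        apply mul_le_mul_of_nonneg_right _ (by positivity)
        apply mul_le_mul_of_nonneg_left hc2 (by positivity)
    _ = (n.choose d : ℝ) * (4 * d) *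
          (3 ^ (n - d) * Real.exp (-(r ^ 2 / (d:ℝ)) * K)) := by
        rw [hM_def]; ring
    _ ≤ (n.choose d : ℝ) * (4 * d) * (3 ^ (n - d) * Real.exp (-((d:ℝ) * r ^ 2) / 4)) := by
        apply mul_le_mul_of_nonneg_left _ (by positivity)
        apply mul_le_mul_of_nonneg_left hexp (by positivity)

lemma pow_le_factorial_mul_exp (m : ℕ) :
    ((m:ℝ)) ^ m ≤ (m.factorial : ℝ) * Real.exp m := by
  have hfac : (0:ℝ) < (m.factorial : ℝ) := by exact_mod_cast m.factorial_pos
  have hs := Real.sum_le_exp_of_nonneg (x := (m:ℝ)) (by positivity) (m + 1)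
  have hterm : ((m:ℝ)) ^ m / (m.factorial : ℝ)
      ≤ ∑ i ∈ Finset.range (m + 1), (m:ℝ) ^ i / (i.factorial : ℝ) :=
    Finset.single_le_sum (f := fun i => (m:ℝ) ^ i / (i.factorial : ℝ))
      (fun i _ => by positivity) (Finset.self_mem_range_succ m)
  have h := le_trans hterm hs
  rw [div_le_iff₀ hfac] at h
  linarith [h]

lemma choose_mul_pow_bound (n m : ℕ) (hm : 1 ≤ m) :
    (n.choose m : ℝ) * 3 ^ m ≤ (3 * Real.exp 1 * (n:ℝ) / m) ^ m := by
  have hmR : (1:ℝ) ≤ (m:ℝ) := by exact_mod_cast hm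
  have hm0 : (0:ℝ) < (m:ℝ) := by linarith
  have hfac : (0:ℝ) < (m.factorial : ℝ) := by exact_mod_cast m.factorial_pos
  have h1 : (n.choose m : ℝ) ≤ (n:ℝ) ^ m / (m.factorial : ℝ) := by
    have := Nat.choose_le_pow_div (α := ℝ) m n
    simpa using this
  have h2 := pow_le_factorial_mul_exp m
  have hrhs : (3 * Real.exp 1 * (n:ℝ) / m) ^ m
      = 3 ^ m * ((n:ℝ) ^ m * Real.exp m / (m:ℝ) ^ m) := by
    rw [div_pow, mul_pow, mul_pow, ← Real.exp_one_pow]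
    ring
  rw [hrhs]
  have key : (n:ℝ) ^ m / (m.factorial : ℝ) ≤ (n:ℝ) ^ m * Real.exp m / (m:ℝ) ^ m := by
    rw [div_le_div_iff₀ hfac (by positivity)]
    have hnn : (0:ℝ) ≤ (n:ℝ) ^ m := by positivity
    nlinarith [mul_le_mul_of_nonneg_left h2 hnn]
  nlinarith [le_trans h1 key, pow_nonneg (by norm_num : (0:ℝ) ≤ 3) m,
    le_trans h1 key]

lemma t_log_bound {t : ℝ} (ht : 0 < t) :
    t * Real.log (6 * Real.exp 1 / t) ≤ 6 * Real.exp 1 * t + 2 * Real.sqrt t := by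
  have he : (0:ℝ) < 6 * Real.exp 1 := by positivity
  have hst : (0:ℝ) < Real.sqrt t := Real.sqrt_pos.2 ht
  rw [Real.log_div he.ne' ht.ne']
  have h1 : Real.log (6 * Real.exp 1) ≤ 6 * Real.exp 1 :=
    le_trans (Real.log_le_sub_one_of_pos he) (by linarith)
  have h2 : -Real.log t ≤ 2 / Real.sqrt t := by
    have : Real.log (1 / Real.sqrt t) ≤ 1 / Real.sqrt t - 1 :=
      Real.log_le_sub_one_of_pos (by positivity)
    rw [one_div, Real.log_inv, Real.log_sqrt ht.le] at this
    rw [div_eq_mul_inv]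
    linarith
  have h3 : t * (-Real.log t) ≤ t * (2 / Real.sqrt t) :=
    mul_le_mul_of_nonneg_left h2 ht.le
  have h4 : t * (2 / Real.sqrt t) = 2 * Real.sqrt t := by
    rw [mul_div_assoc']
    rw [show t * 2 / Real.sqrt t = 2 * (t / Real.sqrt t) by ring_nf]
    rw [Real.div_sqrt]
  nlinarith [mul_le_mul_of_nonneg_left h1 ht.le]

lemma tail_bound (n dn : ℕ) (r a b : ℝ) (h27 : 27 ≤ dn) (hdn : dn < n)
    (hr : 0 < r) (hn2d : (n:ℝ) ≤ 2 * dn)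
    (hphi : 6 * Real.exp 1 * (((n:ℝ) - dn) / dn) +
      2 * Real.sqrt (((n:ℝ) - dn) / dn) ≤ r ^ 2 / 8)
    (ha : -1 ≤ a) (hab : a ≤ b) (hb : b ≤ 1)
    (hh : ∀ h ∈ Set.uIoc a b, r ^ 2 / (dn:ℝ) ≤ h ^ 2) :
    ‖FF n dn a b‖ ≤ 4 * (dn:ℝ) * Real.exp (-((dn:ℝ) * r ^ 2) / 8) := by
  have hdr : (27:ℝ) ≤ dn := by exact_mod_cast h27
  have hd0 : (0:ℝ) < dn := by linarith
  set m := n - dn with hm_def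
  have hm1 : 1 ≤ m := by omega
  have hmcast : (m:ℝ) = (n:ℝ) - dn := by
    rw [hm_def]; exact_mod_cast Nat.cast_sub hdn.le
  have hm0 : (0:ℝ) < (m:ℝ) := by exact_mod_cast hm1
  set t : ℝ := ((n:ℝ) - dn) / dn with ht_def
  have ht0 : 0 < t := div_pos (by rw [← hmcast]; exact hm0) hd0
  -- step 1 : FF_bound
  have step1 := FF_bound n dn a b r h27 hr ha hab hb hh
  -- step 2 : choose bound
  have hcs : (n.choose dn : ℝ) = (n.choose m : ℝ) := by
    rw [hm_def, Nat.choose_symm hdn.le]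
  have step2 : (n.choose m : ℝ) * 3 ^ m ≤ (6 * Real.exp 1 * (dn:ℝ) / m) ^ m := by
    refine le_trans (choose_mul_pow_bound n m hm1) ?_
    apply pow_le_pow_left₀ (by positivity)
    apply (div_le_div_iff_of_pos_right hm0).2
    nlinarith [Real.exp_pos 1]
  -- step 3 : exponent bound
  have hbase : (0:ℝ) < 6 * Real.exp 1 * (dn:ℝ) / m := by positivity
  have step3 : (6 * Real.exp 1 * (dn:ℝ) / m) ^ m ≤ Real.exp ((dn:ℝ) * r ^ 2 / 8) := by
    rw [← Real.exp_log hbase, ← Real.exp_nat_mul]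
    apply Real.exp_le_exp.2
    have h6 : 6 * Real.exp 1 * (dn:ℝ) / m = 6 * Real.exp 1 / t := by
      rw [ht_def, ← hmcast]
      field_simp
    rw [h6]
    have hmt : (m:ℝ) = t * dn := by
      rw [ht_def, ← hmcast]; field_simp
    calc (m:ℝ) * Real.log (6 * Real.exp 1 / t)
        = (dn:ℝ) * (t * Real.log (6 * Real.exp 1 / t)) := by rw [hmt]; ring
      _ ≤ (dn:ℝ) * (6 * Real.exp 1 * t + 2 * Real.sqrt t) := by
          apply mul_le_mul_of_nonneg_left (t_log_bound ht0) hd0.le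
      _ ≤ (dn:ℝ) * (r ^ 2 / 8) := mul_le_mul_of_nonneg_left hphi hd0.le
      _ = (dn:ℝ) * r ^ 2 / 8 := by ring
  -- combine
  refine le_trans step1 ?_
  rw [hcs]
  have key : (n.choose m : ℝ) * 3 ^ m ≤ Real.exp ((dn:ℝ) * r ^ 2 / 8) :=
    le_trans step2 step3
  calc (n.choose m : ℝ) * (4 * dn) * (3 ^ m * Real.exp (-((dn:ℝ) * r ^ 2) / 4))
      = ((n.choose m : ℝ) * 3 ^ m) * (4 * dn) * Real.exp (-((dn:ℝ) * r ^ 2) / 4) := by ring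
    _ ≤ Real.exp ((dn:ℝ) * r ^ 2 / 8) * (4 * dn) * Real.exp (-((dn:ℝ) * r ^ 2) / 4) := by
        apply mul_le_mul_of_nonneg_right _ (Real.exp_pos _).le
        exact mul_le_mul_of_nonneg_right key (by positivity)
    _ = 4 * (dn:ℝ) * Real.exp (-((dn:ℝ) * r ^ 2) / 8) := by
        rw [mul_comm (Real.exp _) (4 * (dn:ℝ)), mul_assoc, ← Real.exp_add]
        ring_nf

lemma bound_tendsto (r : ℝ) (hr : 0 < r) (d : ℕ → ℕ)
    (hdi : Tendsto (fun n : ℕ => (d n : ℝ)) atTop atTop) :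
    Tendsto (fun n : ℕ => 4 * (d n : ℝ) * Real.exp (-((d n : ℝ) * r ^ 2) / 8))
      atTop (nhds 0) := by
  have h1 : Tendsto (fun y : ℝ => y * Real.exp (-y)) atTop (nhds 0) := by
    simpa using Real.tendsto_pow_mul_exp_neg_atTop_nhds_zero 1
  have h2 : Tendsto (fun x : ℝ => x * (r ^ 2 / 8)) atTop atTop :=
    Tendsto.atTop_mul_const (by positivity) tendsto_id
  have h3 := h1.comp h2
  have h4 := h3.const_mul (32 / r ^ 2)
  rw [mul_zero] at h4
  have h5 : Tendsto (fun x : ℝ => 4 * x * Real.exp (-(x * r ^ 2) / 8)) atTop (nhds 0) := by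
    refine h4.congr (fun x => ?_)
    simp only [Function.comp_apply]
    rw [show -(x * (r ^ 2 / 8)) = -(x * r ^ 2) / 8 by ring]
    field_simp
    ring
  exact h5.comp hdi


/-- in the sublinear regime (`d → ∞`, `(n-d)/d → 0`), for every fixed `r > 0`,
the expected number of facets with height outside `(-r/√d, r/√d)` tends to zero. -/
theorem facet_range_sublinear (d : ℕ → ℕ)
    (hd : ∀ᶠ n in atTop, 2 ≤ d n ∧ d n < n)
    (hdi : Tendsto (fun n : ℕ => (d n : ℝ)) atTop atTop)
    (hreg : Tendsto (fun n : ℕ => ((n : ℝ) - (d n : ℝ)) / (d n : ℝ)) atTop (nhds 0)) :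
    ∀ r : ℝ, 0 < r →
      Tendsto (fun n : ℕ => FF n (d n) (-1) (-r / Real.sqrt (d n))) atTop (nhds 0) ∧
      Tendsto (fun n : ℕ => FF n (d n) (r / Real.sqrt (d n)) 1) atTop (nhds 0) := by
  intro r hr
  set t : ℕ → ℝ := fun n => ((n : ℝ) - (d n : ℝ)) / (d n : ℝ) with ht_def
  have hev27 : ∀ᶠ n in atTop, 27 ≤ d n := by
    filter_upwards [hdi.eventually_ge_atTop (27:ℝ)] with n hn
    exact_mod_cast hn
  have hevr2 : ∀ᶠ n in atTop, r ^ 2 ≤ (d n : ℝ) := hdi.eventually_ge_atTop _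
  have hevt1 : ∀ᶠ n in atTop, t n < 1 :=
    hreg.eventually_lt_const (by norm_num : (0:ℝ) < 1)
  have hφt : Tendsto (fun n => 6 * Real.exp 1 * t n + 2 * Real.sqrt (t n)) atTop (nhds 0) := by
    have hs : Tendsto (fun n => Real.sqrt (t n)) atTop (nhds 0) := by
      have := (Real.continuous_sqrt.tendsto 0).comp hreg
      simpa [Function.comp_def] using this
    have := (hreg.const_mul (6 * Real.exp 1)).add (hs.const_mul 2)
    simpa [ht_def] using this
  have hevφ : ∀ᶠ n in atTop,
      6 * Real.exp 1 * t n + 2 * Real.sqrt (t n) ≤ r ^ 2 / 8 := by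
    have := hφt.eventually_lt_const (by positivity : (0:ℝ) < r ^ 2 / 8)
    filter_upwards [this] with n hn using hn.le
  have hB := bound_tendsto r hr d hdi
  have common : ∀ᶠ n in atTop,
      (27 ≤ d n ∧ d n < n) ∧ r ^ 2 ≤ (d n : ℝ) ∧ (n:ℝ) ≤ 2 * (d n : ℝ) ∧
      6 * Real.exp 1 * (((n:ℝ) - (d n : ℝ)) / (d n : ℝ)) +
        2 * Real.sqrt (((n:ℝ) - (d n : ℝ)) / (d n : ℝ)) ≤ r ^ 2 / 8 := by
    filter_upwards [hd, hev27, hevr2, hevt1, hevφ] with n hn h27 hr2 ht1 hφn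
    have hd0 : (0:ℝ) < (d n : ℝ) := by
      have : (27:ℝ) ≤ (d n : ℝ) := by exact_mod_cast h27
      linarith
    refine ⟨⟨h27, hn.2⟩, hr2, ?_, hφn⟩
    rw [ht_def, div_lt_one hd0] at ht1
    linarith
  constructor
  · apply squeeze_zero_norm' _ hB
    filter_upwards [common] with n hn
    obtain ⟨⟨h27, hdn⟩, hr2, hn2d, hφn⟩ := hn
    have hd0 : (0:ℝ) < (d n : ℝ) := by
      have : (27:ℝ) ≤ (d n : ℝ) := by exact_mod_cast h27
      linarith
    have hsq : 0 < Real.sqrt (d n) := Real.sqrt_pos.2 hd0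
    have hr1 : r / Real.sqrt (d n) ≤ 1 := by
      rw [div_le_one hsq]
      exact (Real.le_sqrt hr.le hd0.le).2 hr2
    have hrpos : 0 ≤ r / Real.sqrt (d n) := by positivity
    have hnegdiv : -r / Real.sqrt (d n) = -(r / Real.sqrt (d n)) := neg_div _ _
    apply tail_bound n (d n) r _ _ h27 hdn hr hn2d hφn
    · exact le_refl _
    · rw [hnegdiv]; linarith
    · rw [hnegdiv]; linarith
    · intro h hmem
      rw [Set.uIoc_of_le (by rw [hnegdiv]; linarith : (-1:ℝ) ≤ -r / Real.sqrt (d n))] at hmem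
      have h1 : r / Real.sqrt (d n) ≤ -h := by
        rw [hnegdiv] at hmem
        linarith [hmem.2]
      have h2 : (r / Real.sqrt (d n)) ^ 2 ≤ (-h) ^ 2 :=
        pow_le_pow_left₀ hrpos h1 2
      rw [neg_pow] at h2
      norm_num at h2
      calc r ^ 2 / (d n : ℝ) = (r / Real.sqrt (d n)) ^ 2 := by
            rw [div_pow, Real.sq_sqrt hd0.le]
        _ ≤ h ^ 2 := h2
  · apply squeeze_zero_norm' _ hB
    filter_upwards [common] with n hn
    obtain ⟨⟨h27, hdn⟩, hr2, hn2d, hφn⟩ := hn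
    have hd0 : (0:ℝ) < (d n : ℝ) := by
      have : (27:ℝ) ≤ (d n : ℝ) := by exact_mod_cast h27
      linarith
    have hsq : 0 < Real.sqrt (d n) := Real.sqrt_pos.2 hd0
    have hr1 : r / Real.sqrt (d n) ≤ 1 := by
      rw [div_le_one hsq]
      exact (Real.le_sqrt hr.le hd0.le).2 hr2
    have hrpos : 0 ≤ r / Real.sqrt (d n) := by positivity
    apply tail_bound n (d n) r _ _ h27 hdn hr hn2d hφn
    · linarith
    · exact hr1
    · exact le_refl _
    · intro h hmem
      rw [Set.uIoc_of_le hr1] at hmem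
      have h2 : (r / Real.sqrt (d n)) ^ 2 ≤ h ^ 2 :=
        pow_le_pow_left₀ hrpos hmem.1.le 2
      calc r ^ 2 / (d n : ℝ) = (r / Real.sqrt (d n)) ^ 2 := by
            rw [div_pow, Real.sq_sqrt hd0.le]
        _ ≤ h ^ 2 := h2
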